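/- If X is uniform on an arc {(cos θ, sin θ) : θ ∈ [a, a+t)} of the unit circle with 0 < t ≤ 2π, and c* = E[X], then E[‖X - c*‖²] = (t² + 2cos(t) - 2)/t². -/

import Mathlib

open Real MeasureTheory

/-- The point on the unit circle at angle `θ`, as an element of `ℝ²`. -/
noncomputable def circlePoint (θ : ℝ) : EuclideanSpace ℝ (Fin 2) :=
  (WithLp.equiv 2 (Fin 2 → ℝ)).symm ![Real.cos θ, Real.sin θ]

/-- If `X` is uniform on an arc `{(cos θ, sin θ) : θ ∈ [a, a+t)}` of the unit circle,
`0 < t ≤ 2π`, and `c* = E[X]` is its centroid, then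
`E[‖X - c*‖²] = (t² + 2 cos t - 2)/t²`. -/
theorem stmt_10 (a t : ℝ) (ht : 0 < t) (ht' : t ≤ 2 * π)
    (c : EuclideanSpace ℝ (Fin 2))
    (hc : c = (t⁻¹ : ℝ) • ∫ θ in Set.Ico a (a + t), circlePoint θ) :
    (∫ θ in Set.Ico a (a + t), ‖circlePoint θ - c‖ ^ 2) / t
      = (t ^ 2 + 2 * Real.cos t - 2) / t ^ 2 := by
  have hle : a ≤ a + t := by linarith
  have hIco : ∀ (f : ℝ → ℝ), ∫ θ in Set.Ico a (a+t), f θ = ∫ θ in a..(a+t), f θ := by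
    intro f
    rw [MeasureTheory.integral_Ico_eq_integral_Ioo, ← MeasureTheory.integral_Ioc_eq_integral_Ioo,
      ← intervalIntegral.integral_of_le hle]
  have hcont : Continuous circlePoint := by
    unfold circlePoint
    exact (PiLp.continuous_toLp 2 _).comp (by
      apply continuous_pi; intro i; fin_cases i <;> simp <;> continuity)
  have hint : IntegrableOn circlePoint (Set.Ico a (a+t)) volume :=
    (hcont.integrableOn_Icc).mono_set Set.Ico_subset_Icc_self
  set S := Real.sin (a+t) - Real.sin a with hS
  set C := Real.cos a - Real.cos (a+t) with hC
  have hc0 : c 0 = S / t := by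
    have key : (∫ θ in Set.Ico a (a+t), circlePoint θ) 0
        = ∫ θ in Set.Ico a (a+t), Real.cos θ :=
      ((EuclideanSpace.proj (0:Fin 2) : EuclideanSpace ℝ (Fin 2) →L[ℝ] ℝ).integral_comp_comm hint).symm
    rw [hc]
    show t⁻¹ * (∫ θ in Set.Ico a (a + t), circlePoint θ) 0 = _
    rw [key, hIco]
    simp; ring
  have hc1 : c 1 = C / t := by
    have key : (∫ θ in Set.Ico a (a+t), circlePoint θ) 1
        = ∫ θ in Set.Ico a (a+t), Real.sin θ :=
      ((EuclideanSpace.proj (1:Fin 2) : EuclideanSpace ℝ (Fin 2) →L[ℝ] ℝ).integral_comp_comm hint).symm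
    rw [hc]
    show t⁻¹ * (∫ θ in Set.Ico a (a + t), circlePoint θ) 1 = _
    rw [key, hIco]
    simp; ring
  have hnorm : ∀ θ : ℝ, ‖circlePoint θ - c‖ ^ 2
      = (1 + (c 0)^2 + (c 1)^2) - 2 * c 0 * Real.cos θ - 2 * c 1 * Real.sin θ := by
    intro θ
    rw [EuclideanSpace.norm_eq, Real.sq_sqrt (by positivity)]
    have e0 : (circlePoint θ - c) 0 = Real.cos θ - c 0 := rfl
    have e1 : (circlePoint θ - c) 1 = Real.sin θ - c 1 := rfl
    rw [Fin.sum_univ_two]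
    simp only [Real.norm_eq_abs, sq_abs, e0, e1]
    have := Real.sin_sq_add_cos_sq θ
    nlinarith [Real.sin_sq_add_cos_sq θ]
  simp only [hnorm]
  rw [hIco]
  have h1 : ∫ θ in a..(a+t), ((1 + (c 0)^2 + (c 1)^2) - 2 * c 0 * Real.cos θ - 2 * c 1 * Real.sin θ)
      = (1 + (c 0)^2 + (c 1)^2) * t - 2 * c 0 * S - 2 * c 1 * C := by
    have i1 : IntervalIntegrable (fun _ : ℝ => 1 + c 0 ^ 2 + c 1 ^ 2) volume a (a+t) :=
      intervalIntegrable_const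
    have i2 : IntervalIntegrable (fun θ : ℝ => 2 * c 0 * Real.cos θ) volume a (a+t) :=
      (continuous_const.mul Real.continuous_cos).intervalIntegrable _ _
    have i3 : IntervalIntegrable (fun θ : ℝ => 2 * c 1 * Real.sin θ) volume a (a+t) :=
      (continuous_const.mul Real.continuous_sin).intervalIntegrable _ _
    rw [intervalIntegral.integral_sub (i1.sub i2) i3,
      intervalIntegral.integral_sub i1 i2,
      intervalIntegral.integral_const, intervalIntegral.integral_const_mul,
      intervalIntegral.integral_const_mul, integral_cos, integral_sin]
    simp only [smul_eq_mul, hS, hC]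
    ring
  rw [h1, hc0, hc1]
  have hsc : S^2 + C^2 = 2 - 2 * Real.cos t := by
    have : Real.cos ((a+t) - a) = Real.cos (a+t) * Real.cos a + Real.sin (a+t) * Real.sin a :=
      Real.cos_sub (a+t) a
    simp only [add_sub_cancel_left] at this
    rw [hS, hC]
    nlinarith [Real.sin_sq_add_cos_sq a, Real.sin_sq_add_cos_sq (a+t)]
  rw [hS, hC] at hsc
  field_simp
  linear_combination (-1) * hsc
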